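/- Let k_x, k_z, k_1, k_3 > 0 and k_2 ≥ 0 be real constants, and define θ* := k_3/(k_1+k_3) and ε* := k_x·k_z/(k_x·k_2 + k_1·k_3). Then for every ε with 0 < ε < ε* there exists λ > 0 such that for all real a ≥ 0 and b ≥ 0: -(1-θ*)·k_x·a² + (θ*·k_1 + (1-θ*)·k_3)·a·b - θ*·(k_z/ε - k_2)·b² ≤ -λ·(a² + b²). -/

import Mathlib

lemma quad_aux (A B C lam a b : ℝ) (hA : 0 < A - lam)
    (h : 0 ≤ (A - lam) * (C - lam) - B ^ 2) :
    -A * a ^ 2 + 2 * B * a * b - C * b ^ 2 ≤ -lam * (a ^ 2 + b ^ 2) := by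
  nlinarith [sq_nonneg ((A - lam) * a - B * b), mul_nonneg h (sq_nonneg b), sq_nonneg b]

/-- Completing-the-square estimate for the composite Lyapunov–Foster function:
with `θ* = k₃/(k₁+k₃)` and `ε* = kₓ·k_z/(kₓ·k₂ + k₁·k₃)`, for every `0 < ε < ε*` there is
`λ > 0` so that the quadratic form in `(a, b)` is bounded by `-λ(a² + b²)`. -/
theorem stmt0 (kx kz k1 k2 k3 : ℝ) (hkx : 0 < kx) (hkz : 0 < kz) (hk1 : 0 < k1)
    (hk3 : 0 < k3) (hk2 : 0 ≤ k2) :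
    ∀ ε : ℝ, 0 < ε → ε < kx * kz / (kx * k2 + k1 * k3) →
      ∃ lam > (0 : ℝ), ∀ a b : ℝ, 0 ≤ a → 0 ≤ b →
        -(1 - k3 / (k1 + k3)) * kx * a ^ 2
          + ((k3 / (k1 + k3)) * k1 + (1 - k3 / (k1 + k3)) * k3) * a * b
          - (k3 / (k1 + k3)) * (kz / ε - k2) * b ^ 2
        ≤ -lam * (a ^ 2 + b ^ 2) := by
  intro ε hε hε'
  have hs : 0 < k1 + k3 := by linarith
  have hden : 0 < kx * k2 + k1 * k3 := by positivity
  have h1 : ε * (kx * k2 + k1 * k3) < kx * kz := (lt_div_iff₀ hden).mp hε'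
  have hu : kz / ε * ε = kz := div_mul_cancel₀ _ (ne_of_gt hε)
  have hkey : k1 * k3 < kx * (kz / ε - k2) := by nlinarith [hu, h1, hε]
  set A : ℝ := k1 * kx / (k1 + k3) with hA
  set B : ℝ := k1 * k3 / (k1 + k3) with hB
  set C : ℝ := (k3 / (k1 + k3)) * (kz / ε - k2) with hC
  have hApos : 0 < A := by positivity
  have hCpos : 0 < C := by
    have : 0 < kz / ε - k2 := by nlinarith
    positivity
  have hdet : 0 < A * C - B ^ 2 := by
    have heq : A * C - B ^ 2
        = k1 * k3 * (kx * (kz / ε - k2) - k1 * k3) / (k1 + k3) ^ 2 := by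
      rw [hA, hB, hC]; field_simp
    rw [heq]
    have : 0 < kx * (kz / ε - k2) - k1 * k3 := by linarith
    positivity
  set lam : ℝ := (A * C - B ^ 2) / (A + C) with hlam
  have hAC : 0 < A + C := by linarith
  have hmul : lam * (A + C) = A * C - B ^ 2 := div_mul_cancel₀ _ (ne_of_gt hAC)
  have hlampos : 0 < lam := div_pos hdet hAC
  have hAlam : 0 < A - lam := by nlinarith [sq_nonneg B]
  have hdet2 : 0 ≤ (A - lam) * (C - lam) - B ^ 2 := by nlinarith [sq_nonneg lam]
  refine ⟨lam, hlampos, fun a b _ _ => ?_⟩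
  have heq : -(1 - k3 / (k1 + k3)) * kx * a ^ 2
      + ((k3 / (k1 + k3)) * k1 + (1 - k3 / (k1 + k3)) * k3) * a * b
      - (k3 / (k1 + k3)) * (kz / ε - k2) * b ^ 2
      = -A * a ^ 2 + 2 * B * a * b - C * b ^ 2 := by
    rw [hA, hB, hC]
    have hne : k1 + k3 ≠ 0 := ne_of_gt hs
    field_simp
    ring_nf
  rw [heq]
  exact quad_aux A B C lam a b hAlam hdet2
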